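/- Let a > 0, b < 0, p > 1, δ > 0, and let u : (−∞, 0) → (0, ∞) be differentiable with u'(t) ≥ δ·|a·u(t) + b·u(t)^p| for all t < 0 and limsup_{t→−∞} u(t) ≤ (−a/b)^{1/(p−1)}. Then either lim_{t→−∞} u(t) = (−a/b)^{1/(p−1)}, or there exist c > 0 and C > 0 such that u(t) ≤ C·e^{ct} for all sufficiently negative t. -/

import Mathlib

open Filter Set Real Topology

theorem stmt_17 (a b p δ : ℝ) (ha : 0 < a) (hb : b < 0) (hp : 1 < p) (hδ : 0 < δ)
    (u u' : ℝ → ℝ) (hpos : ∀ t < (0 : ℝ), 0 < u t)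
    (hderiv : ∀ t < (0 : ℝ), HasDerivAt u (u' t) t)
    (hineq : ∀ t < (0 : ℝ), u' t ≥ δ * |a * u t + b * u t ^ p|)
    (hlimsup : Filter.limsup u Filter.atBot ≤ (-a / b) ^ (1 / (p - 1))) :
    Filter.Tendsto u Filter.atBot (nhds ((-a / b) ^ (1 / (p - 1)))) ∨
    (∃ c > (0 : ℝ), ∃ C > (0 : ℝ), ∃ t₁ : ℝ, ∀ t ≤ t₁, u t ≤ C * Real.exp (c * t)) := by
  have hp1 : 0 < p - 1 := by linarith
  have hab : 0 < -a / b := div_pos_iff.2 (Or.inr ⟨by linarith, hb⟩)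
  set L : ℝ := (-a / b) ^ (1 / (p - 1)) with hLdef
  have hL : 0 < L := Real.rpow_pos_of_pos hab _
  have hLpow : L ^ (p - 1) = -a / b := by
    rw [hLdef, ← Real.rpow_mul hab.le, one_div,
      inv_mul_cancel₀ (ne_of_gt hp1), Real.rpow_one]
  -- monotonicity of u on Iio 0
  have hmono : MonotoneOn u (Iio 0) := by
    apply monotoneOn_of_hasDerivWithinAt_nonneg (f' := u') (convex_Iio 0)
    · exact fun t ht => ((hderiv t ht).continuousAt.continuousWithinAt)
    · intro x hx
      rw [interior_Iio] at hx
      exact ((hderiv x hx).hasDerivWithinAt)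
    · intro x hx
      rw [interior_Iio] at hx
      exact le_trans (mul_nonneg hδ.le (abs_nonneg _)) (hineq x hx)
  set v : ℝ → ℝ := fun t => u (min t (-1)) with hvdef
  have hvmem : ∀ t : ℝ, min t (-1) ∈ Iio (0 : ℝ) := by
    intro t
    simp only [mem_Iio]
    exact lt_of_le_of_lt (min_le_right t (-1)) (by norm_num)
  have hvmono : Monotone v := fun s t hst =>
    hmono (hvmem s) (hvmem t) (min_le_min hst le_rfl)
  have hbdd : BddBelow (Set.range v) := ⟨0, by rintro y ⟨t, rfl⟩; exact (hpos _ (hvmem t)).le⟩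
  have htendv : Tendsto v atBot (𝓝 (⨅ t, v t)) := tendsto_atBot_ciInf hvmono hbdd
  set m : ℝ := ⨅ t, v t with hmdef
  have heq : u =ᶠ[atBot] v := by
    filter_upwards [eventually_le_atBot (-1 : ℝ)] with t ht
    simp [hvdef, min_eq_left ht]
  have hmL : m ≤ L := by
    have : limsup u atBot = m := by
      rw [Filter.limsup_congr heq]
      exact htendv.limsup_eq
    linarith [hlimsup, this.symm.le, this.le]
  rcases eq_or_lt_of_le hmL with hmeq | hmlt
  · left
    rw [← hmeq]
    exact htendv.congr' heq.symm
  · right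
    set L' : ℝ := (m + L) / 2 with hL'def
    have hm0 : (0 : ℝ) ≤ m := le_ciInf fun t => (hpos _ (hvmem t)).le
    have hL'pos : 0 < L' := by rw [hL'def]; linarith
    have hL'lt : L' < L := by rw [hL'def]; linarith
    have hmL' : m < L' := by rw [hL'def]; linarith
    obtain ⟨T, hT⟩ := eventually_atBot.1 (htendv.eventually_lt_const hmL')
    set t₁ : ℝ := min T (-1) with ht₁def
    have ht₁0 : t₁ < 0 := lt_of_le_of_lt (min_le_right _ _) (by norm_num)
    have hsmall : ∀ t ≤ t₁, u t < L' := by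
      intro t ht
      have h1 : t ≤ -1 := le_trans ht (min_le_right _ _)
      have := hT t (le_trans ht (min_le_left _ _))
      simpa [hvdef, min_eq_left h1] using this
    set A : ℝ := a + b * L' ^ (p - 1) with hAdef
    have hbL : b * (-a / b) = -a := by
      rw [mul_comm]; exact div_mul_cancel₀ _ (ne_of_lt hb)
    have hA : 0 < A := by
      have h1 : L' ^ (p - 1) < L ^ (p - 1) :=
        Real.rpow_lt_rpow hL'pos.le hL'lt hp1
      have h2 : b * L ^ (p - 1) < b * L' ^ (p - 1) := by
        exact mul_lt_mul_of_neg_left h1 hb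
      rw [hLpow, hbL] at h2
      rw [hAdef]; linarith
    set c : ℝ := δ * A with hcdef
    have hc : 0 < c := mul_pos hδ hA
    have hkey : ∀ t ≤ t₁, c * u t ≤ u' t := by
      intro t ht
      have ht0 : t < 0 := lt_of_le_of_lt ht ht₁0
      have hut : 0 < u t := hpos t ht0
      have hutL' : u t < L' := hsmall t ht
      have hsplit : a * u t + b * u t ^ p = u t * (a + b * u t ^ (p - 1)) := by
        have hep : p = 1 + (p - 1) := by ring
        rw [hep, Real.rpow_add hut, Real.rpow_one]
        ring_nf
      have hfac : A ≤ a + b * u t ^ (p - 1) := by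
        have h1 : u t ^ (p - 1) ≤ L' ^ (p - 1) :=
          Real.rpow_le_rpow hut.le hutL'.le hp1.le
        have h2 : b * L' ^ (p - 1) ≤ b * u t ^ (p - 1) :=
          mul_le_mul_of_nonpos_left h1 hb.le
        rw [hAdef]; linarith
      have habs : |a * u t + b * u t ^ p| = u t * (a + b * u t ^ (p - 1)) := by
        rw [hsplit]
        exact abs_of_nonneg (mul_nonneg hut.le (le_trans hA.le hfac))
      have := hineq t ht0
      rw [habs] at this
      have h3 : δ * (u t * A) ≤ δ * (u t * (a + b * u t ^ (p - 1))) := by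
        apply mul_le_mul_of_nonneg_left _ hδ.le
        exact mul_le_mul_of_nonneg_left hfac hut.le
      calc c * u t = δ * (u t * A) := by rw [hcdef]; ring
        _ ≤ δ * (u t * (a + b * u t ^ (p - 1))) := h3
        _ ≤ u' t := this
    -- exponential bound via g t = u t * exp (-(c*t))
    set g : ℝ → ℝ := fun t => u t * Real.exp (-(c * t)) with hgdef
    have hexp : ∀ t : ℝ, HasDerivAt (fun s => Real.exp (-(c * s))) (Real.exp (-(c * t)) * (-c)) t := by
      intro t
      have h1 : HasDerivAt (fun s : ℝ => -(c * s)) (-c) t := by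
        have h0 := ((hasDerivAt_id t).const_mul c).neg
        simp only [mul_one] at h0
        exact h0
      exact (Real.hasDerivAt_exp (-(c * t))).comp t h1
    have hgd : ∀ t < (0:ℝ), HasDerivAt g
        (u' t * Real.exp (-(c * t)) + u t * (Real.exp (-(c * t)) * (-c))) t := by
      intro t ht
      exact (hderiv t ht).mul (hexp t)
    have hgmono : MonotoneOn g (Iic t₁) := by
      apply monotoneOn_of_hasDerivWithinAt_nonneg
        (f' := fun t => u' t * Real.exp (-(c * t)) + u t * (Real.exp (-(c * t)) * (-c)))
        (convex_Iic t₁)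
      · exact fun t ht => ((hgd t (lt_of_le_of_lt ht ht₁0)).continuousAt.continuousWithinAt)
      · intro x hx
        rw [interior_Iic] at hx
        exact ((hgd x (lt_trans hx ht₁0)).hasDerivWithinAt)
      · intro x hx
        rw [interior_Iic] at hx
        have h1 := hkey x hx.le
        have h2 := (Real.exp_pos (-(c * x)))
        nlinarith
    refine ⟨c, hc, u t₁ * Real.exp (-(c * t₁)), mul_pos (hpos t₁ ht₁0) (Real.exp_pos _), t₁, ?_⟩
    intro t ht
    have hgle : u t * Real.exp (-(c * t)) ≤ u t₁ * Real.exp (-(c * t₁)) :=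
      hgmono (a := t) (b := t₁) ht (le_refl t₁ : t₁ ∈ Iic t₁) ht
    have h1 : u t * (Real.exp (-(c * t)) * Real.exp (c * t)) ≤
        u t₁ * Real.exp (-(c * t₁)) * Real.exp (c * t) := by
      rw [← mul_assoc]; exact mul_le_mul_of_nonneg_right hgle (Real.exp_pos _).le
    have h2 : Real.exp (-(c * t)) * Real.exp (c * t) = 1 := by
      rw [← Real.exp_add, neg_add_cancel, Real.exp_zero]
    rw [h2, mul_one] at h1
    exact h1
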